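/- Let K₁,…,K_{d+1} be a strongly separated family of nonempty compact convex sets in ℝ^d such that every d-element subfamily is affinely spanning (for every i, the affine span of ⋃_{j ≠ i} K_j is all of ℝ^d). Let A ⊔ B = {1,…,d+1} be a partition and let a ∈ A. Then there exists exactly one pair (u,α) with ‖u‖ = 1 such that, writing H = {x : ⟨u,x⟩ = α}: (1) H ∩ K_i ≠ ∅ for every i ≠ a; (2) K_i ⊆ {x : ⟨u,x⟩ ≥ α} for every i ∈ A; (3) K_i ⊆ {x : ⟨u,x⟩ ≤ α} for every i ∈ B; and (4) K_a ⊆ {x : ⟨u,x⟩ > α}. -/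

import Mathlib

open scoped InnerProductSpace

/-- A family of sets in `ℝ^d` is strongly separated if every subset of indices can be
strictly separated from its complement by an affine hyperplane. -/
def StronglySeparated {d m : ℕ} (S : Fin m → Set (EuclideanSpace ℝ (Fin d))) : Prop :=
  ∀ I : Finset (Fin m), ∃ (u : EuclideanSpace ℝ (Fin d)) (α : ℝ), u ≠ 0 ∧
    (∀ i ∈ I, ∀ x ∈ S i, ⟪u, x⟫_ℝ < α) ∧ (∀ i, i ∉ I → ∀ x ∈ S i, α < ⟪u, x⟫_ℝ)

variable {d m : ℕ}

/-- Any transversal of a strongly separated family is affinely independent. -/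
lemma StronglySeparated.transversal_affineIndependent
    {K : Fin m → Set (EuclideanSpace ℝ (Fin d))}
    (hsep : StronglySeparated K) {x : Fin m → EuclideanSpace ℝ (Fin d)}
    (hx : ∀ i, x i ∈ K i) : AffineIndependent ℝ x := by
  rw [affineIndependent_iff]
  intro s w hw0 hsum
  by_contra h
  push_neg at h
  obtain ⟨i₀, hi₀s, hi₀⟩ := h
  obtain ⟨u, α, hu, hlt, hgt⟩ := hsep (s.filter (fun i => 0 < w i))
  have h1 : ∑ i ∈ s, w i * ⟪u, x i⟫_ℝ = 0 := by
    have h := congrArg (fun y => ⟪u, y⟫_ℝ) hsum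
    simp only [inner_sum, real_inner_smul_right, inner_zero_right] at h
    exact h
  have h2 : ∑ i ∈ s, w i * (⟪u, x i⟫_ℝ - α) = 0 := by
    have : ∑ i ∈ s, w i * (⟪u, x i⟫_ℝ - α)
        = ∑ i ∈ s, w i * ⟪u, x i⟫_ℝ - α * ∑ i ∈ s, w i := by
      rw [Finset.mul_sum, ← Finset.sum_sub_distrib]
      exact Finset.sum_congr rfl fun i _ => by ring
    rw [this, h1, hw0]; ring
  have hterm : ∀ i ∈ s, w i * (⟪u, x i⟫_ℝ - α) ≤ 0 := by
    intro i hi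
    rcases lt_trichotomy (w i) 0 with hw | hw | hw
    · have : α < ⟪u, x i⟫_ℝ := by
        refine hgt i ?_ (x i) (hx i)
        simp only [Finset.mem_filter]
        rintro ⟨-, h'⟩; exact absurd h' (not_lt.2 hw.le)
      nlinarith
    · simp [hw]
    · have : ⟪u, x i⟫_ℝ < α := by
        refine hlt i ?_ (x i) (hx i)
        simp only [Finset.mem_filter]; exact ⟨hi, hw⟩
      nlinarith
  have hstrict : w i₀ * (⟪u, x i₀⟫_ℝ - α) < 0 := by
    rcases lt_or_gt_of_ne hi₀ with hw | hw
    · have : α < ⟪u, x i₀⟫_ℝ := by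
        refine hgt i₀ ?_ (x i₀) (hx i₀)
        simp only [Finset.mem_filter]
        rintro ⟨-, h'⟩; exact absurd h' (not_lt.2 hw.le)
      nlinarith
    · have : ⟪u, x i₀⟫_ℝ < α := by
        refine hlt i₀ ?_ (x i₀) (hx i₀)
        simp only [Finset.mem_filter]; exact ⟨hi₀s, hw⟩
      nlinarith
  have hlt0 : ∑ i ∈ s, w i * (⟪u, x i⟫_ℝ - α) < ∑ i ∈ s, (0:ℝ) :=
    Finset.sum_lt_sum hterm ⟨i₀, hi₀s, hstrict⟩
  rw [Finset.sum_const_zero] at hlt0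
  exact absurd h2 (ne_of_lt hlt0)

/-- No hyperplane contains a full transversal of a strongly separated family of
`d+1` sets in `ℝ^d`. -/
lemma StronglySeparated.not_cotangent
    {K : Fin (d + 1) → Set (EuclideanSpace ℝ (Fin d))}
    (hsep : StronglySeparated K) {y : Fin (d + 1) → EuclideanSpace ℝ (Fin d)}
    (hy : ∀ i, y i ∈ K i) {w : EuclideanSpace ℝ (Fin d)} {γ : ℝ}
    (hw : w ≠ 0) (hpl : ∀ i, ⟪w, y i⟫_ℝ = γ) : False := by
  have hind := hsep.transversal_affineIndependent hy
  have htop : affineSpan ℝ (Set.range y) = ⊤ :=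
    hind.affineSpan_eq_top_iff_card_eq_finrank_add_one.2 (by simp)
  set S : AffineSubspace ℝ (EuclideanSpace ℝ (Fin d)) :=
    { carrier := {x | ⟪w, x⟫_ℝ = γ}
      smul_vsub_vadd_mem' := by
        intro c p₁ p₂ p₃ h₁ h₂ h₃
        simp only [Set.mem_setOf_eq] at h₁ h₂ h₃ ⊢
        have : c • (p₁ -ᵥ p₂) +ᵥ p₃ = c • (p₁ - p₂) + p₃ := rfl
        rw [this, inner_add_right, real_inner_smul_right, inner_sub_right, h₁, h₂, h₃]
        ring } with hS
  have hle : affineSpan ℝ (Set.range y) ≤ S := by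
    rw [affineSpan_le]
    rintro _ ⟨i, rfl⟩
    exact hpl i
  rw [htop] at hle
  have hmem : (y 0 + w) ∈ S := hle trivial
  have : ⟪w, y 0 + w⟫_ℝ = γ := hmem
  rw [inner_add_right, hpl 0, real_inner_self_eq_norm_sq] at this
  have : ‖w‖ = 0 := by nlinarith [norm_nonneg w]
  exact hw (norm_eq_zero.1 this)

/-- Intermediate value theorem for an affine functional on a segment inside a convex set. -/
lemma convex_inner_ivt {S : Set (EuclideanSpace ℝ (Fin d))} (hS : Convex ℝ S)
    {x y : EuclideanSpace ℝ (Fin d)} (hx : x ∈ S) (hy : y ∈ S)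
    {w : EuclideanSpace ℝ (Fin d)} {γ : ℝ}
    (h : (⟪w, x⟫_ℝ - γ) * (⟪w, y⟫_ℝ - γ) ≤ 0) : ∃ z ∈ S, ⟪w, z⟫_ℝ = γ := by
  set s := ⟪w, x⟫_ℝ - γ with hs'
  set t := ⟪w, y⟫_ℝ - γ with ht'
  rcases eq_or_ne s 0 with h0 | hs0
  · exact ⟨x, hx, by rw [hs'] at h0; linarith⟩
  have hts : t - s ≠ 0 := by
    intro he
    have : t = s := by linarith
    rw [this] at h
    exact hs0 (mul_self_eq_zero.1 (le_antisymm h (mul_self_nonneg s)))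
  set r := (-s) / (t - s) with hr'
  have hr0 : 0 ≤ r := by
    rcases lt_or_gt_of_ne hs0 with hneg | hpos
    · have ht0 : 0 ≤ t := by nlinarith
      exact div_nonneg (by linarith) (by linarith)
    · have ht0 : t ≤ 0 := by nlinarith
      rw [hr', ← neg_div_neg_eq]
      exact div_nonneg (by linarith) (by linarith)
  have hr1 : r ≤ 1 := by
    rcases lt_or_gt_of_ne hs0 with hneg | hpos
    · have ht0 : 0 ≤ t := by nlinarith
      rw [hr', div_le_one (by linarith)]
      linarith
    · have ht0 : t ≤ 0 := by nlinarith
      rw [hr', ← neg_div_neg_eq, div_le_one (by linarith)]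
      linarith
  refine ⟨(1 - r) • x + r • y, hS hx hy (by linarith) (by linarith) (by ring), ?_⟩
  rw [inner_add_right, real_inner_smul_right, real_inner_smul_right]
  have hwx : ⟪w, x⟫_ℝ = γ + s := by rw [hs']; ring
  have hwy : ⟪w, y⟫_ℝ = γ + t := by rw [ht']; ring
  rw [hwx, hwy, hr']
  field_simp
  ring

/-- Uniqueness part of the main theorem. -/
lemma uniq_aux {d : ℕ} (hd : 0 < d)
    {K : Fin (d + 1) → Set (EuclideanSpace ℝ (Fin d))}
    (hconv : ∀ i, Convex ℝ (K i)) (hne : ∀ i, (K i).Nonempty)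
    (hsep : StronglySeparated K)
    {A B : Finset (Fin (d + 1))} (hunion : A ∪ B = Finset.univ)
    {a : Fin (d + 1)}
    {p q : EuclideanSpace ℝ (Fin d) × ℝ}
    (hp : ‖p.1‖ = 1 ∧
      (∀ i : Fin (d + 1), i ≠ a → ({x | ⟪p.1, x⟫_ℝ = p.2} ∩ K i).Nonempty) ∧
      (∀ i ∈ A, K i ⊆ {x | p.2 ≤ ⟪p.1, x⟫_ℝ}) ∧
      (∀ i ∈ B, K i ⊆ {x | ⟪p.1, x⟫_ℝ ≤ p.2}) ∧
      K a ⊆ {x | p.2 < ⟪p.1, x⟫_ℝ})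
    (hq : ‖q.1‖ = 1 ∧
      (∀ i : Fin (d + 1), i ≠ a → ({x | ⟪q.1, x⟫_ℝ = q.2} ∩ K i).Nonempty) ∧
      (∀ i ∈ A, K i ⊆ {x | q.2 ≤ ⟪q.1, x⟫_ℝ}) ∧
      (∀ i ∈ B, K i ⊆ {x | ⟪q.1, x⟫_ℝ ≤ q.2}) ∧
      K a ⊆ {x | q.2 < ⟪q.1, x⟫_ℝ}) :
    p = q := by
  obtain ⟨hp1, hptang, hpA, hpB, hpa⟩ := hp
  obtain ⟨hq1, hqtang, hqA, hqB, hqa⟩ := hq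
  -- a member of A or B
  have hAB : ∀ i : Fin (d + 1), i ∈ A ∨ i ∈ B := fun i =>
    Finset.mem_union.1 (hunion.symm ▸ Finset.mem_univ i)
  by_cases huv : p.1 = q.1
  · -- equal normals: equal offsets using any tangency point
    have : ∃ i : Fin (d + 1), i ≠ a := by
      rcases eq_or_ne a 0 with h0 | h0
      · exact ⟨⟨1, by omega⟩, by rw [h0]; intro h; simpa using congrArg Fin.val h⟩
      · exact ⟨0, fun h => h0 h.symm⟩
    obtain ⟨i, hia⟩ := this
    obtain ⟨x, hxH, hxK⟩ := hptang i hia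
    obtain ⟨y, hyH, hyK⟩ := hqtang i hia
    simp only [Set.mem_setOf_eq] at hxH hyH
    have h21 : p.2 = q.2 := by
      rcases hAB i with hiA | hiB
      · have e1 : q.2 ≤ ⟪q.1, x⟫_ℝ := hqA i hiA hxK
        have e2 : p.2 ≤ ⟪p.1, y⟫_ℝ := hpA i hiA hyK
        rw [← huv] at e1
        rw [huv] at e2
        rw [hxH] at e1; rw [hyH] at e2
        linarith
      · have e1 : ⟪q.1, x⟫_ℝ ≤ q.2 := hqB i hiB hxK
        have e2 : ⟪p.1, y⟫_ℝ ≤ p.2 := hpB i hiB hyK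
        rw [← huv] at e1
        rw [huv] at e2
        rw [hxH] at e1; rw [hyH] at e2
        linarith
    exact Prod.ext huv h21
  · -- distinct normals: derive a contradiction
    exfalso
    obtain ⟨qa, hqaK⟩ := hne a
    have hpqa : p.2 < ⟪p.1, qa⟫_ℝ := hpa hqaK
    have hqqa : q.2 < ⟪q.1, qa⟫_ℝ := hqa hqaK
    set τ : ℝ := (⟪p.1, qa⟫_ℝ - p.2) / (⟪q.1, qa⟫_ℝ - q.2) with hτdef
    have hτ : 0 < τ := div_pos (by linarith) (by linarith)
    set w : EuclideanSpace ℝ (Fin d) := p.1 - τ • q.1 with hwdef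
    set γ : ℝ := p.2 - τ * q.2 with hγdef
    have hwinner : ∀ z : EuclideanSpace ℝ (Fin d),
        ⟪w, z⟫_ℝ = ⟪p.1, z⟫_ℝ - τ * ⟪q.1, z⟫_ℝ := by
      intro z
      rw [hwdef, inner_sub_left, real_inner_smul_left]
    have hwne : w ≠ 0 := by
      intro h0
      rw [hwdef, sub_eq_zero] at h0
      have : ‖p.1‖ = τ * ‖q.1‖ := by
        rw [h0, norm_smul, Real.norm_eq_abs, abs_of_pos hτ]
      rw [hp1, hq1, mul_one] at this
      rw [h0, ← this, one_smul] at huv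
      exact huv rfl
    have hz : ∀ i : Fin (d + 1), ∃ z ∈ K i, ⟪w, z⟫_ℝ = γ := by
      intro i
      by_cases hia : i = a
      · refine ⟨qa, hia ▸ hqaK, ?_⟩
        have hden : ⟪q.1, qa⟫_ℝ - q.2 ≠ 0 := by linarith
        have hτmul : τ * (⟪q.1, qa⟫_ℝ - q.2) = ⟪p.1, qa⟫_ℝ - p.2 := by
          rw [hτdef, div_mul_cancel₀ _ hden]
        rw [hwinner, hγdef]
        linear_combination -hτmul
      · obtain ⟨x, hxH, hxK⟩ := hptang i hia
        obtain ⟨y, hyH, hyK⟩ := hqtang i hia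
        simp only [Set.mem_setOf_eq] at hxH hyH
        have hx' : ⟪w, x⟫_ℝ - γ = -(τ * (⟪q.1, x⟫_ℝ - q.2)) := by
          rw [hwinner, hγdef, hxH]; ring
        have hy' : ⟪w, y⟫_ℝ - γ = (⟪p.1, y⟫_ℝ - p.2) - τ * (⟪q.1, y⟫_ℝ - q.2) := by
          rw [hwinner, hγdef]; ring
        rw [hyH] at hy'
        have hy'' : ⟪w, y⟫_ℝ - γ = ⟪p.1, y⟫_ℝ - p.2 := by rw [hy']; ring
        refine convex_inner_ivt (hconv i) hxK hyK ?_
        rcases hAB i with hiA | hiB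
        · have e1 : q.2 ≤ ⟪q.1, x⟫_ℝ := hqA i hiA hxK
          have e2 : p.2 ≤ ⟪p.1, y⟫_ℝ := hpA i hiA hyK
          have h1 : 0 ≤ τ * (⟪q.1, x⟫_ℝ - q.2) := mul_nonneg hτ.le (by linarith)
          have h2 : 0 ≤ ⟪p.1, y⟫_ℝ - p.2 := by linarith
          rw [hx', hy'']
          nlinarith [mul_nonneg h1 h2]
        · have e1 : ⟪q.1, x⟫_ℝ ≤ q.2 := hqB i hiB hxK
          have e2 : ⟪p.1, y⟫_ℝ ≤ p.2 := hpB i hiB hyK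
          have h1 : τ * (⟪q.1, x⟫_ℝ - q.2) ≤ 0 :=
            mul_nonpos_of_nonneg_of_nonpos hτ.le (by linarith)
          have h2 : ⟪p.1, y⟫_ℝ - p.2 ≤ 0 := by linarith
          rw [hx', hy'']
          nlinarith [mul_nonneg (neg_nonneg.2 h1) (neg_nonneg.2 h2)]
    choose z hzK hzI using hz
    exact hsep.not_cotangent hzK hwne hzI


/-- The pencil lemma: two hyperplanes, each tangent to all sets `i ∉ {a, i₁}` with
the prescribed sides, strictly positive on `K a`, passing through pins `c, c' ∈ K i₁`
respectively, such that the incidence products are of the same sign, are impossible. -/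
lemma win_lemma {d : ℕ}
    {K : Fin (d + 1) → Set (EuclideanSpace ℝ (Fin d))}
    (hconv : ∀ i, Convex ℝ (K i)) (hne : ∀ i, (K i).Nonempty)
    (hsep : StronglySeparated K)
    {A B : Finset (Fin (d + 1))} (hunion : A ∪ B = Finset.univ)
    {a i₁ : Fin (d + 1)}
    {c c' : EuclideanSpace ℝ (Fin d)} (hc : c ∈ K i₁) (hc' : c' ∈ K i₁)
    {p q : EuclideanSpace ℝ (Fin d) × ℝ}
    (hptang : ∀ i : Fin (d + 1), i ≠ a → i ≠ i₁ →
      ({x | ⟪p.1, x⟫_ℝ = p.2} ∩ K i).Nonempty)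
    (hpA : ∀ i ∈ A, i ≠ i₁ → K i ⊆ {x | p.2 ≤ ⟪p.1, x⟫_ℝ})
    (hpB : ∀ i ∈ B, i ≠ i₁ → K i ⊆ {x | ⟪p.1, x⟫_ℝ ≤ p.2})
    (hpa : K a ⊆ {x | p.2 < ⟪p.1, x⟫_ℝ})
    (hqtang : ∀ i : Fin (d + 1), i ≠ a → i ≠ i₁ →
      ({x | ⟪q.1, x⟫_ℝ = q.2} ∩ K i).Nonempty)
    (hqA : ∀ i ∈ A, i ≠ i₁ → K i ⊆ {x | q.2 ≤ ⟪q.1, x⟫_ℝ})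
    (hqB : ∀ i ∈ B, i ≠ i₁ → K i ⊆ {x | ⟪q.1, x⟫_ℝ ≤ q.2})
    (hqa : K a ⊆ {x | q.2 < ⟪q.1, x⟫_ℝ})
    (hpc : ⟪p.1, c⟫_ℝ = p.2) (hqc' : ⟪q.1, c'⟫_ℝ = q.2)
    (h1 : 0 ≤ (⟪p.1, c'⟫_ℝ - p.2) * (⟪q.1, c⟫_ℝ - q.2))
    (h2 : ⟪p.1, c'⟫_ℝ ≠ p.2) : False := by
  have hAB : ∀ i : Fin (d + 1), i ∈ A ∨ i ∈ B := fun i =>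
    Finset.mem_union.1 (hunion.symm ▸ Finset.mem_univ i)
  obtain ⟨qa, hqaK⟩ := hne a
  have hpqa : p.2 < ⟪p.1, qa⟫_ℝ := hpa hqaK
  have hqqa : q.2 < ⟪q.1, qa⟫_ℝ := hqa hqaK
  set τ : ℝ := (⟪p.1, qa⟫_ℝ - p.2) / (⟪q.1, qa⟫_ℝ - q.2) with hτdef
  have hτ : 0 < τ := div_pos (by linarith) (by linarith)
  set w : EuclideanSpace ℝ (Fin d) := p.1 - τ • q.1 with hwdef
  set γ : ℝ := p.2 - τ * q.2 with hγdef
  have hwinner : ∀ z : EuclideanSpace ℝ (Fin d),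
      ⟪w, z⟫_ℝ = ⟪p.1, z⟫_ℝ - τ * ⟪q.1, z⟫_ℝ := by
    intro z
    rw [hwdef, inner_sub_left, real_inner_smul_left]
  have hden : ⟪q.1, qa⟫_ℝ - q.2 ≠ 0 := by linarith
  have hτmul : τ * (⟪q.1, qa⟫_ℝ - q.2) = ⟪p.1, qa⟫_ℝ - p.2 := by
    rw [hτdef, div_mul_cancel₀ _ hden]
  have hwne : w ≠ 0 := by
    intro h0
    have hz : ∀ z : EuclideanSpace ℝ (Fin d), ⟪p.1, z⟫_ℝ - τ * ⟪q.1, z⟫_ℝ = 0 := by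
      intro z
      rw [← hwinner z, h0, inner_zero_left]
    have e1 := hz qa
    have e2 := hz c'
    have hγz : p.2 - τ * q.2 = 0 := by linear_combination e1 + hτmul
    have hc2 : ⟪p.1, c'⟫_ℝ - p.2 = τ * (⟪q.1, c'⟫_ℝ - q.2) := by
      linear_combination e2 - hγz
    rw [hqc'] at hc2
    simp only [sub_self, mul_zero] at hc2
    exact h2 (by linarith)
  have hz : ∀ i : Fin (d + 1), ∃ z ∈ K i, ⟪w, z⟫_ℝ = γ := by
    intro i
    by_cases hia : i = a
    · refine ⟨qa, hia ▸ hqaK, ?_⟩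
      rw [hwinner, hγdef]
      linear_combination -hτmul
    · by_cases hii : i = i₁
      · subst hii
        refine convex_inner_ivt (hconv i) hc hc' ?_
        have e1 : ⟪w, c⟫_ℝ - γ = -(τ * (⟪q.1, c⟫_ℝ - q.2)) := by
          rw [hwinner, hγdef, hpc]; ring
        have e2 : ⟪w, c'⟫_ℝ - γ = (⟪p.1, c'⟫_ℝ - p.2) - τ * (⟪q.1, c'⟫_ℝ - q.2) := by
          rw [hwinner, hγdef]; ring
        rw [hqc'] at e2
        have e2' : ⟪w, c'⟫_ℝ - γ = ⟪p.1, c'⟫_ℝ - p.2 := by rw [e2]; ring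
        rw [e1, e2']
        nlinarith [mul_nonneg hτ.le h1]
      · obtain ⟨x, hxH, hxK⟩ := hptang i hia hii
        obtain ⟨y, hyH, hyK⟩ := hqtang i hia hii
        simp only [Set.mem_setOf_eq] at hxH hyH
        have hx' : ⟪w, x⟫_ℝ - γ = -(τ * (⟪q.1, x⟫_ℝ - q.2)) := by
          rw [hwinner, hγdef, hxH]; ring
        have hy' : ⟪w, y⟫_ℝ - γ = (⟪p.1, y⟫_ℝ - p.2) - τ * (⟪q.1, y⟫_ℝ - q.2) := by
          rw [hwinner, hγdef]; ring
        rw [hyH] at hy'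
        have hy'' : ⟪w, y⟫_ℝ - γ = ⟪p.1, y⟫_ℝ - p.2 := by rw [hy']; ring
        refine convex_inner_ivt (hconv i) hxK hyK ?_
        rcases hAB i with hiA | hiB
        · have e1 : q.2 ≤ ⟪q.1, x⟫_ℝ := hqA i hiA hii hxK
          have e2 : p.2 ≤ ⟪p.1, y⟫_ℝ := hpA i hiA hii hyK
          have h1' : 0 ≤ τ * (⟪q.1, x⟫_ℝ - q.2) := mul_nonneg hτ.le (by linarith)
          have h2' : 0 ≤ ⟪p.1, y⟫_ℝ - p.2 := by linarith
          rw [hx', hy'']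
          nlinarith [mul_nonneg h1' h2']
        · have e1 : ⟪q.1, x⟫_ℝ ≤ q.2 := hqB i hiB hii hxK
          have e2 : ⟪p.1, y⟫_ℝ ≤ p.2 := hpB i hiB hii hyK
          have h1' : τ * (⟪q.1, x⟫_ℝ - q.2) ≤ 0 :=
            mul_nonpos_of_nonneg_of_nonpos hτ.le (by linarith)
          have h2' : ⟪p.1, y⟫_ℝ - p.2 ≤ 0 := by linarith
          rw [hx', hy'']
          nlinarith [mul_nonneg (neg_nonneg.2 h1') (neg_nonneg.2 h2')]
  choose z hzK hzI using hz
  exact hsep.not_cotangent hzK hwne hzI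

/-- Replacing one member of a strongly separated family by a singleton inside it preserves
strong separation. -/
lemma StronglySeparated.update {K : Fin m → Set (EuclideanSpace ℝ (Fin d))}
    (hsep : StronglySeparated K) {i₁ : Fin m} {c : EuclideanSpace ℝ (Fin d)}
    (hc : c ∈ K i₁) : StronglySeparated (Function.update K i₁ {c}) := by
  intro I
  obtain ⟨u, α, hu, hlt, hgt⟩ := hsep I
  refine ⟨u, α, hu, fun i hi x hx => ?_, fun i hi x hx => ?_⟩
  · rcases eq_or_ne i i₁ with rfl | hii
    · rw [Function.update_self, Set.mem_singleton_iff] at hx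
      subst hx
      exact hlt i hi x hc
    · rw [Function.update_of_ne hii] at hx
      exact hlt i hi x hx
  · rcases eq_or_ne i i₁ with rfl | hii
    · rw [Function.update_self, Set.mem_singleton_iff] at hx
      subst hx
      exact hgt i hi x hc
    · rw [Function.update_of_ne hii] at hx
      exact hgt i hi x hx

/-- Variant of `convex_inner_ivt` also providing the segment combination. -/
lemma convex_inner_ivt' {S : Set (EuclideanSpace ℝ (Fin d))} (hS : Convex ℝ S)
    {x y : EuclideanSpace ℝ (Fin d)} (hx : x ∈ S) (hy : y ∈ S)
    {w : EuclideanSpace ℝ (Fin d)} {γ : ℝ}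
    (h : (⟪w, x⟫_ℝ - γ) * (⟪w, y⟫_ℝ - γ) ≤ 0) :
    ∃ r : ℝ, 0 ≤ r ∧ r ≤ 1 ∧ (1 - r) • x + r • y ∈ S ∧
      ⟪w, (1 - r) • x + r • y⟫_ℝ = γ := by
  set s := ⟪w, x⟫_ℝ - γ with hs'
  set t := ⟪w, y⟫_ℝ - γ with ht'
  rcases eq_or_ne s 0 with h0 | hs0
  · refine ⟨0, le_refl 0, zero_le_one, ?_, ?_⟩
    · simpa using hx
    · rw [hs'] at h0
      simp only [sub_zero, zero_smul, add_zero, one_smul]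
      linarith
  have hts : t - s ≠ 0 := by
    intro he
    have : t = s := by linarith
    rw [this] at h
    exact hs0 (mul_self_eq_zero.1 (le_antisymm h (mul_self_nonneg s)))
  set r := (-s) / (t - s) with hr'
  have hr0 : 0 ≤ r := by
    rcases lt_or_gt_of_ne hs0 with hneg | hpos
    · have ht0 : 0 ≤ t := by nlinarith
      exact div_nonneg (by linarith) (by linarith)
    · have ht0 : t ≤ 0 := by nlinarith
      rw [hr', ← neg_div_neg_eq]
      exact div_nonneg (by linarith) (by linarith)
  have hr1 : r ≤ 1 := by
    rcases lt_or_gt_of_ne hs0 with hneg | hpos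
    · have ht0 : 0 ≤ t := by nlinarith
      rw [hr', div_le_one (by linarith)]
      linarith
    · have ht0 : t ≤ 0 := by nlinarith
      rw [hr', ← neg_div_neg_eq, div_le_one (by linarith)]
      linarith
  refine ⟨r, hr0, hr1, hS hx hy (by linarith) (by linarith) (by ring), ?_⟩
  rw [inner_add_right, real_inner_smul_right, real_inner_smul_right]
  have hwx : ⟪w, x⟫_ℝ = γ + s := by rw [hs']; ring
  have hwy : ⟪w, y⟫_ℝ = γ + t := by rw [ht']; ring
  rw [hwx, hwy, hr']
  field_simp
  ring

/-- Base case of the existence induction: all the sets other than `K a` are singletons. -/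
lemma exists_sol_singletons {d : ℕ} (hd : 0 < d)
    {K : Fin (d + 1) → Set (EuclideanSpace ℝ (Fin d))}
    (hconv : ∀ i, Convex ℝ (K i)) (hne : ∀ i, (K i).Nonempty)
    (hsep : StronglySeparated K)
    {A B : Finset (Fin (d + 1))} (hdisj : Disjoint A B) (hunion : A ∪ B = Finset.univ)
    {a : Fin (d + 1)} (ha : a ∈ A)
    (hsing : ∀ i : Fin (d + 1), i ≠ a → ∃ x, K i = {x}) :
    ∃ p : EuclideanSpace ℝ (Fin d) × ℝ, ‖p.1‖ = 1 ∧
      (∀ i : Fin (d + 1), i ≠ a → ({x | ⟪p.1, x⟫_ℝ = p.2} ∩ K i).Nonempty) ∧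
      (∀ i ∈ A, K i ⊆ {x | p.2 ≤ ⟪p.1, x⟫_ℝ}) ∧
      (∀ i ∈ B, K i ⊆ {x | ⟪p.1, x⟫_ℝ ≤ p.2}) ∧
      K a ⊆ {x | p.2 < ⟪p.1, x⟫_ℝ} := by
  classical
  obtain ⟨qa, hqa⟩ := hne a
  -- the transversal consisting of the singleton points and `qa`
  have hxx : ∀ i : Fin (d + 1), ∃ z, z ∈ K i ∧ (i ≠ a → K i = {z}) := by
    intro i
    by_cases hia : i = a
    · exact ⟨qa, hia ▸ hqa, fun h => absurd hia h⟩
    · obtain ⟨z, hz⟩ := hsing i hia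
      exact ⟨z, by rw [hz]; rfl, fun _ => hz⟩
  choose x hxK hxS using hxx
  -- the points of the transversal away from `a`
  set y : Fin d → EuclideanSpace ℝ (Fin d) := fun j => x (a.succAbove j) with hy
  have hind : AffineIndependent ℝ x := hsep.transversal_affineIndependent hxK
  have hindy : AffineIndependent ℝ y := hind.comp_embedding (a.succAboveOrderEmb).toEmbedding
  -- a normal vector to the affine span of `y`
  set V : Submodule ℝ (EuclideanSpace ℝ (Fin d)) := vectorSpan ℝ (Set.range y) with hV
  have hVrank : Module.finrank ℝ V = d - 1 := by
    have := hindy.finrank_vectorSpan (n := d - 1) (by rw [Fintype.card_fin]; omega)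
    simpa [hV] using this
  have hVorth : Vᗮ ≠ ⊥ := by
    intro hbot
    have h1 : Module.finrank ℝ V + Module.finrank ℝ Vᗮ
        = Module.finrank ℝ (EuclideanSpace ℝ (Fin d)) :=
      Submodule.finrank_add_finrank_orthogonal V
    rw [hbot, hVrank] at h1
    simp [finrank_euclideanSpace_fin] at h1
    omega
  obtain ⟨u₀, hu₀V, hu₀⟩ := Submodule.exists_mem_ne_zero_of_ne_bot hVorth
  set u₁ : EuclideanSpace ℝ (Fin d) := ‖u₀‖⁻¹ • u₀ with hu₁
  have hu₁V : u₁ ∈ Vᗮ := Submodule.smul_mem _ _ hu₀V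
  have hu₁n : ‖u₁‖ = 1 := norm_smul_inv_norm hu₀
  -- all the points `y j` have the same inner product with `u₁`
  have hyeq : ∀ j : Fin d, ⟪u₁, y j⟫_ℝ = ⟪u₁, y ⟨0, hd⟩⟫_ℝ := by
    intro j
    have hmem : y j -ᵥ y ⟨0, hd⟩ ∈ V :=
      vsub_mem_vectorSpan ℝ (Set.mem_range_self j) (Set.mem_range_self (⟨0, hd⟩ : Fin d))
    have h0 : ⟪y j - y ⟨0, hd⟩, u₁⟫_ℝ = 0 := (Submodule.mem_orthogonal V u₁).1 hu₁V _ hmem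
    rw [inner_sub_left] at h0
    have c1 := real_inner_comm (y j) u₁
    have c2 := real_inner_comm (y ⟨0, hd⟩) u₁
    linarith
  have hyeq' : ∀ i : Fin (d + 1), i ≠ a → ⟪u₁, x i⟫_ℝ = ⟪u₁, y ⟨0, hd⟩⟫_ℝ := by
    intro i hia
    obtain ⟨j, hj⟩ := Fin.exists_succAbove_eq hia
    rw [← hj]
    exact hyeq j
  set α₁ : ℝ := ⟪u₁, y ⟨0, hd⟩⟫_ℝ with hα₁
  -- no point of `K a` lies on the hyperplane
  have hKa : ∀ z ∈ K a, ⟪u₁, z⟫_ℝ ≠ α₁ := by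
    intro z hz hzα
    have hne0 : u₁ ≠ 0 := fun h => by simp [h] at hu₁n
    refine hsep.not_cotangent (y := fun i => if i = a then z else x i)
      (fun i => ?_) hne0 (γ := α₁) (fun i => ?_)
    · by_cases hia : i = a
      · simpa [hia] using hz
      · simpa [hia] using hxK i
    · by_cases hia : i = a
      · simpa [hia] using hzα
      · simpa [hia] using hyeq' i hia
  -- orient so that `qa` is strictly positive
  have hqa1 : ⟪u₁, qa⟫_ℝ ≠ α₁ := hKa qa hqa
  obtain ⟨u, α, hun, hu_eq, hu_qa, hu_ne⟩ :
      ∃ (u : EuclideanSpace ℝ (Fin d)) (α : ℝ), ‖u‖ = 1 ∧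
        (∀ i, i ≠ a → ⟪u, x i⟫_ℝ = α) ∧ α < ⟪u, qa⟫_ℝ ∧
        (∀ z ∈ K a, ⟪u, z⟫_ℝ ≠ α) := by
    rcases lt_or_gt_of_ne hqa1 with hlt | hgt
    · refine ⟨-u₁, -α₁, by simpa using hu₁n, fun i hia => ?_, ?_, fun z hz h => ?_⟩
      · rw [inner_neg_left, hyeq' i hia]
      · rw [inner_neg_left]; linarith
      · rw [inner_neg_left, neg_eq_iff_eq_neg, neg_neg] at h
        exact hKa z hz h
    · exact ⟨u₁, α₁, hu₁n, fun i hia => hyeq' i hia, hgt, hKa⟩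
  have hKa' : ∀ z ∈ K a, α < ⟪u, z⟫_ℝ := by
    intro z hz
    rcases lt_trichotomy ⟪u, z⟫_ℝ α with h | h | h
    · exfalso
      have hprod : (⟪u, z⟫_ℝ - α) * (⟪u, qa⟫_ℝ - α) ≤ 0 := by nlinarith
      obtain ⟨zz, hzzK, hzzI⟩ := convex_inner_ivt (hconv a) hz hqa hprod
      exact hu_ne zz hzzK hzzI
    · exact absurd h (hu_ne z hz)
    · exact h
  have haB : a ∉ B := fun hmem => (Finset.disjoint_left.1 hdisj) ha hmem
  refine ⟨(u, α), hun, fun i hia => ⟨x i, hu_eq i hia, hxK i⟩, ?_, ?_, fun z hz => hKa' z hz⟩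
  · intro i hiA z hz
    by_cases hia : i = a
    · exact le_of_lt (hKa' z (hia ▸ hz))
    · have hzx : z = x i := by
        have := hxS i hia
        rw [this] at hz
        exact hz
      simp only [Set.mem_setOf_eq, hzx, hu_eq i hia, le_refl]
  · intro i hiB z hz
    have hia : i ≠ a := fun h => haB (h ▸ hiB)
    have hzx : z = x i := by
      have := hxS i hia
      rw [this] at hz
      exact hz
    simp only [Set.mem_setOf_eq, hzx, hu_eq i hia, le_refl]

/-- The solution predicate for the main theorem. -/
def IsSol {d : ℕ} (K : Fin (d + 1) → Set (EuclideanSpace ℝ (Fin d)))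
    (A B : Finset (Fin (d + 1))) (a : Fin (d + 1))
    (p : EuclideanSpace ℝ (Fin d) × ℝ) : Prop :=
  ‖p.1‖ = 1 ∧
    (∀ i : Fin (d + 1), i ≠ a → ({x | ⟪p.1, x⟫_ℝ = p.2} ∩ K i).Nonempty) ∧
    (∀ i ∈ A, K i ⊆ {x | p.2 ≤ ⟪p.1, x⟫_ℝ}) ∧
    (∀ i ∈ B, K i ⊆ {x | ⟪p.1, x⟫_ℝ ≤ p.2}) ∧
    K a ⊆ {x | p.2 < ⟪p.1, x⟫_ℝ}

/-- Induction step for the existence proof: if every "pinned" instance (where `K i₁` is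
replaced by a singleton inside it) has a solution, then so does the original family. -/
lemma exists_sol_step {d : ℕ}
    {K : Fin (d + 1) → Set (EuclideanSpace ℝ (Fin d))}
    (hd : 0 < d)
    (hcomp : ∀ i, IsCompact (K i)) (hconv : ∀ i, Convex ℝ (K i))
    (hne : ∀ i, (K i).Nonempty) (hsep : StronglySeparated K)
    {A B : Finset (Fin (d + 1))} (hdisj : Disjoint A B) (hunion : A ∪ B = Finset.univ)
    {a : Fin (d + 1)} (ha : a ∈ A) {i₁ : Fin (d + 1)} (hi₁a : i₁ ≠ a)
    (HEx : ∀ c ∈ K i₁, ∃ p, IsSol (Function.update K i₁ {c}) A B a p) :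
    ∃ p, IsSol K A B a p := by
  classical
  set σ : ℝ := if i₁ ∈ A then 1 else -1 with hσdef
  have hσ1 : σ = 1 ∨ σ = -1 := by
    rcases ite_eq_or_eq (i₁ ∈ A) (1:ℝ) (-1) with h | h
    · exact Or.inl h
    · exact Or.inr h
  have hσne : σ ≠ 0 := by rcases hσ1 with h | h <;> rw [h] <;> norm_num
  have hkey : ∀ x y : ℝ, σ * x < 0 → σ * y ≤ 0 → 0 ≤ x * y := by
    intro x y hx hy
    rcases hσ1 with h | h <;> rw [h] at hx hy <;> nlinarith
  have hkey2 : ∀ x : ℝ, σ * x < 0 → x ≠ 0 := by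
    intro x hx h0
    rw [h0, mul_zero] at hx
    exact lt_irrefl 0 hx
  set F : (EuclideanSpace ℝ (Fin d) × ℝ) → EuclideanSpace ℝ (Fin d) → ℝ :=
    fun p y => σ * (⟪p.1, y⟫_ℝ - p.2) with hFdef
  -- basic facts about solutions of pinned instances
  have hupd : ∀ (c : EuclideanSpace ℝ (Fin d)) (i : Fin (d + 1)), i ≠ i₁ →
      Function.update K i₁ ({c} : Set (EuclideanSpace ℝ (Fin d))) i = K i :=
    fun c i h => Function.update_of_ne h _ _
  have hpin : ∀ c ∈ K i₁, ∀ p, IsSol (Function.update K i₁ {c}) A B a p →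
      ⟪p.1, c⟫_ℝ = p.2 := by
    intro c _ p hp
    obtain ⟨z, hz1, hz2⟩ := hp.2.1 i₁ hi₁a
    rw [Function.update_self, Set.mem_singleton_iff] at hz2
    rw [← hz2]
    exact hz1
  have htang : ∀ (c : EuclideanSpace ℝ (Fin d)) (p), IsSol (Function.update K i₁ {c}) A B a p →
      ∀ i, i ≠ a → i ≠ i₁ → ({x | ⟪p.1, x⟫_ℝ = p.2} ∩ K i).Nonempty := by
    intro c p hp i hia hii
    have := hp.2.1 i hia
    rwa [hupd c i hii] at this
  have hsideA : ∀ (c : EuclideanSpace ℝ (Fin d)) (p), IsSol (Function.update K i₁ {c}) A B a p →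
      ∀ i ∈ A, i ≠ i₁ → K i ⊆ {x | p.2 ≤ ⟪p.1, x⟫_ℝ} := by
    intro c p hp i hiA hii
    have := hp.2.2.1 i hiA
    rwa [hupd c i hii] at this
  have hsideB : ∀ (c : EuclideanSpace ℝ (Fin d)) (p), IsSol (Function.update K i₁ {c}) A B a p →
      ∀ i ∈ B, i ≠ i₁ → K i ⊆ {x | ⟪p.1, x⟫_ℝ ≤ p.2} := by
    intro c p hp i hiB hii
    have := hp.2.2.2.1 i hiB
    rwa [hupd c i hii] at this
  have hstricta : ∀ (c : EuclideanSpace ℝ (Fin d)) (p), IsSol (Function.update K i₁ {c}) A B a p →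
      K a ⊆ {x | p.2 < ⟪p.1, x⟫_ℝ} := by
    intro c p hp
    have := hp.2.2.2.2
    rwa [hupd c a (Ne.symm hi₁a)] at this
  -- a pinned solution whose pinned set lies (weakly) on the correct side solves the original
  have hassemble : ∀ c ∈ K i₁, ∀ p, IsSol (Function.update K i₁ {c}) A B a p →
      (∀ y ∈ K i₁, 0 ≤ F p y) → IsSol K A B a p := by
    intro c hc p hp hside
    refine ⟨hp.1, fun i hia => ?_, fun i hiA => ?_, fun i hiB => ?_, hstricta c p hp⟩
    · by_cases hii : i = i₁
      · exact ⟨c, hpin c hc p hp, hii ▸ hc⟩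
      · exact htang c p hp i hia hii
    · by_cases hii : i = i₁
      · intro y hy
        have := hside y (hii ▸ hy)
        have hσA : σ = 1 := by rw [hσdef, if_pos (hii ▸ hiA)]
        rw [hFdef] at this
        simp only [hσA, one_mul] at this
        show p.2 ≤ ⟪p.1, y⟫_ℝ
        linarith
      · exact hsideA c p hp i hiA hii
    · by_cases hii : i = i₁
      · intro y hy
        have := hside y (hii ▸ hy)
        have hσB : σ = -1 := by
          rw [hσdef, if_neg (fun hA => (Finset.disjoint_left.1 hdisj) hA (hii ▸ hiB))]
        rw [hFdef] at this
        simp only [hσB] at this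
        show ⟪p.1, y⟫_ℝ ≤ p.2
        linarith
      · exact hsideB c p hp i hiB hii
  -- rigidity: a pinned solution through another point of `K i₁` is a solution pinned there
  have hrig : ∀ c ∈ K i₁, ∀ p, IsSol (Function.update K i₁ {c}) A B a p →
      ∀ z ∈ K i₁, ⟪p.1, z⟫_ℝ = p.2 → IsSol (Function.update K i₁ {z}) A B a p := by
    intro c hc p hp z hz hzp
    refine ⟨hp.1, fun i hia => ?_, fun i hiA => ?_, fun i hiB => ?_, ?_⟩
    · by_cases hii : i = i₁
      · subst hii
        exact ⟨z, hzp, by rw [Function.update_self]; rfl⟩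
      · rw [hupd z i hii]
        exact htang c p hp i hia hii
    · by_cases hii : i = i₁
      · subst hii
        rw [Function.update_self]
        intro y hy
        rw [Set.mem_singleton_iff] at hy
        subst hy
        simp only [Set.mem_setOf_eq, hzp, le_refl]
      · rw [hupd z i hii]
        exact hsideA c p hp i hiA hii
    · by_cases hii : i = i₁
      · subst hii
        rw [Function.update_self]
        intro y hy
        rw [Set.mem_singleton_iff] at hy
        subst hy
        simp only [Set.mem_setOf_eq, hzp, le_refl]
      · rw [hupd z i hii]
        exact hsideB c p hp i hiB hii
    · rw [hupd z a (Ne.symm hi₁a)]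
      exact hstricta c p hp
  -- uniqueness of pinned solutions
  have huniq : ∀ c ∈ K i₁, ∀ p q, IsSol (Function.update K i₁ {c}) A B a p →
      IsSol (Function.update K i₁ {c}) A B a q → p = q := by
    intro c hc p q hp hq
    have hconv' : ∀ i, Convex ℝ (Function.update K i₁ ({c} : Set (EuclideanSpace ℝ (Fin d))) i) := by
      intro i
      by_cases hii : i = i₁
      · subst hii; rw [Function.update_self]; exact convex_singleton c
      · rw [hupd c i hii]; exact hconv i
    have hne' : ∀ i, (Function.update K i₁ ({c} : Set (EuclideanSpace ℝ (Fin d))) i).Nonempty := by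
      intro i
      by_cases hii : i = i₁
      · subst hii; rw [Function.update_self]; exact Set.singleton_nonempty c
      · rw [hupd c i hii]; exact hne i
    exact uniq_aux hd hconv' hne' (hsep.update hc) hunion hp hq
  by_contra hno
  push_neg at hno
  -- every pinned solution is violated somewhere on `K i₁`
  have Hviol : ∀ c ∈ K i₁, ∀ p, IsSol (Function.update K i₁ {c}) A B a p →
      ∃ y ∈ K i₁, F p y < 0 := by
    intro c hc p hp
    by_contra h
    push_neg at h
    exact hno p (hassemble c hc p hp h)
  -- one step of the chain: a pinned solution and the deepest violator
  have Hstep : ∀ c ∈ K i₁, ∃ (p : EuclideanSpace ℝ (Fin d) × ℝ)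
      (c' : EuclideanSpace ℝ (Fin d)),
      IsSol (Function.update K i₁ {c}) A B a p ∧ c' ∈ K i₁ ∧
      (∀ y ∈ K i₁, F p c' ≤ F p y) ∧ F p c' < 0 := by
    intro c hc
    obtain ⟨p, hp⟩ := HEx c hc
    have hcont : ContinuousOn (F p) (K i₁) :=
      (((continuous_const.inner continuous_id).sub continuous_const).const_smul σ).continuousOn
    obtain ⟨c', hc'K, hc'min⟩ := (hcomp i₁).exists_isMinOn (hne i₁) hcont
    obtain ⟨y, hyK, hy⟩ := Hviol c hc p hp
    exact ⟨p, c', hp, hc'K, fun z hz => hc'min hz, lt_of_le_of_lt (hc'min hyK) hy⟩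
  choose! pfun cfun hsol hmem hmin hneg using Hstep
  -- the chain
  obtain ⟨c₀, hc₀⟩ := hne i₁
  set S : ℕ → {z : EuclideanSpace ℝ (Fin d) // z ∈ K i₁} := fun n =>
    Nat.rec ⟨c₀, hc₀⟩ (fun _ prev => ⟨cfun prev.1, hmem prev.1 prev.2⟩) n with hS
  set P : ℕ → EuclideanSpace ℝ (Fin d) × ℝ := fun n => pfun (S n).1 with hP
  have hSsucc : ∀ n : ℕ, (S (n + 1)).1 = cfun (S n).1 := fun n => rfl
  have hsol' : ∀ n, IsSol (Function.update K i₁ {(S n).1}) A B a (P n) :=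
    fun n => hsol (S n).1 (S n).2
  have hmin' : ∀ n, ∀ y ∈ K i₁, F (P n) ((S (n + 1)).1) ≤ F (P n) y := by
    intro n y hy
    rw [hSsucc n]
    exact hmin (S n).1 (S n).2 y hy
  have hneg' : ∀ n, F (P n) ((S (n + 1)).1) < 0 := by
    intro n
    rw [hSsucc n]
    exact hneg (S n).1 (S n).2
  have hpin' : ∀ n, ⟪(P n).1, (S n).1⟫_ℝ = (P n).2 :=
    fun n => hpin (S n).1 (S n).2 (P n) (hsol' n)
  -- the chain relation
  have hchain : ∀ m m' : ℕ, m < m' → F (P m) ((S m').1) ≤ 0 := by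
    intro m m' hmm'
    induction m' with
    | zero => omega
    | succ k IH =>
      rcases Nat.lt_succ_iff_lt_or_eq.1 hmm' with hmk | hmk
      · have hk := IH hmk
        rcases hk.lt_or_eq with hlt | heq
        · by_contra hpos
          push_neg at hpos
          have hprod : (⟪(P m).1, (S k).1⟫_ℝ - (P m).2) *
              (⟪(P m).1, (S (k + 1)).1⟫_ℝ - (P m).2) ≤ 0 := by
            rcases hσ1 with h | h <;> rw [hFdef] at hlt hpos <;>
              simp only [h] at hlt hpos <;> nlinarith
          obtain ⟨r, hr0, hr1, hzK, hzI⟩ :=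
            convex_inner_ivt' (hconv i₁) (S k).2 (S (k + 1)).2 hprod
          set z : EuclideanSpace ℝ (Fin d) := (1 - r) • (S k).1 + r • (S (k + 1)).1 with hz
          have hPmz := hrig (S m).1 (S m).2 (P m) (hsol' m) z hzK hzI
          have hFPkz : ⟪(P k).1, z⟫_ℝ - (P k).2
              = r * (⟪(P k).1, (S (k + 1)).1⟫_ℝ - (P k).2) := by
            rw [hz, inner_add_right, real_inner_smul_right, real_inner_smul_right]
            linear_combination (1 - r) * (hpin' k)
          have hFkz : σ * (⟪(P k).1, z⟫_ℝ - (P k).2) ≤ 0 := by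
            have hX := hneg' k
            simp only [hFdef] at hX
            have hre : σ * (⟪(P k).1, z⟫_ℝ - (P k).2)
                = r * (σ * (⟪(P k).1, (S (k + 1)).1⟫_ℝ - (P k).2)) := by
              rw [hFPkz]; ring
            rw [hre]
            exact mul_nonpos_of_nonneg_of_nonpos hr0 hX.le
          have hlt' := hlt
          simp only [hFdef] at hlt'
          refine win_lemma hconv hne hsep hunion hzK (S k).2
            (htang z (P m) hPmz) (hsideA z (P m) hPmz) (hsideB z (P m) hPmz)
            (hstricta z (P m) hPmz)
            (htang (S k).1 (P k) (hsol' k)) (hsideA (S k).1 (P k) (hsol' k))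
            (hsideB (S k).1 (P k) (hsol' k)) (hstricta (S k).1 (P k) (hsol' k))
            hzI (hpin' k) ?_ ?_
          · exact hkey _ _ hlt' hFkz
          · exact fun h => hkey2 _ hlt' (by rw [h]; ring)
        · have hinner : ⟪(P m).1, (S k).1⟫_ℝ = (P m).2 := by
            simp only [hFdef] at heq
            rcases mul_eq_zero.1 heq with h | h
            · exact absurd h hσne
            · linarith
          have hPk := hrig (S m).1 (S m).2 (P m) (hsol' m) (S k).1 (S k).2 hinner
          have hPmk : P m = P k := huniq (S k).1 (S k).2 _ _ hPk (hsol' k)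
          rw [hPmk]
          exact (hneg' k).le
      · subst hmk
        exact (hneg' m).le
  -- get a bound for the sets and set up the compact container
  obtain ⟨R, hR⟩ := (hcomp i₁).isBounded.subset_closedBall 0
  obtain ⟨qa, hqaK⟩ := hne a
  have hcontact0 : ∀ (n : ℕ) (i : Fin (d + 1)),
      ∃ z, z ∈ K i ∧ (i ≠ a → i ≠ i₁ → ⟪(P n).1, z⟫_ℝ = (P n).2) := by
    intro n i
    by_cases hia : i = a
    · exact ⟨qa, hia ▸ hqaK, fun h => absurd hia h⟩
    · by_cases hii : i = i₁
      · exact ⟨(S n).1, hii ▸ (S n).2, fun _ h => absurd hii h⟩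
      · obtain ⟨z, hz1, hz2⟩ := htang (S n).1 (P n) (hsol' n) i hia hii
        exact ⟨z, hz2, fun _ _ => hz1⟩
  choose X₀ hX₀K hX₀eq using hcontact0
  set X : ℕ → Fin (d + 1) → EuclideanSpace ℝ (Fin d) := fun n i =>
    if i = a then qa else if i = i₁ then (S n).1 else X₀ n i with hX
  have hXK : ∀ n i, X n i ∈ K i := by
    intro n i
    rw [hX]
    by_cases hia : i = a
    · simp only [if_pos hia]; exact hia ▸ hqaK
    · by_cases hii : i = i₁
      · simp only [if_neg hia, if_pos hii]; exact hii ▸ (S n).2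
      · simp only [if_neg hia, if_neg hii]; exact hX₀K n i
  have hXeq : ∀ n i, i ≠ a → ⟪(P n).1, X n i⟫_ℝ = (P n).2 := by
    intro n i hia
    rw [hX]
    by_cases hii : i = i₁
    · simp only [if_neg hia, if_pos hii]
      exact hii ▸ hpin' n
    · simp only [if_neg hia, if_neg hii]
      exact hX₀eq n i hia hii
  have hXi₁ : ∀ n, X n i₁ = (S n).1 := by
    intro n
    simp [hX, hi₁a]
  have hPnorm : ∀ n, ‖(P n).1‖ = 1 := fun n => (hsol' n).1
  have hPbd : ∀ n, |(P n).2| ≤ R := by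
    intro n
    rw [← hpin' n]
    calc |⟪(P n).1, (S n).1⟫_ℝ| ≤ ‖(P n).1‖ * ‖(S n).1‖ := abs_real_inner_le_norm _ _
    _ = ‖(S n).1‖ := by rw [hPnorm n, one_mul]
    _ ≤ R := mem_closedBall_zero_iff.1 (hR (S n).2)
  set Cont : Set ((Fin (d + 1) → EuclideanSpace ℝ (Fin d)) × (EuclideanSpace ℝ (Fin d) × ℝ)) :=
    (Set.univ.pi K) ×ˢ (Metric.sphere (0 : EuclideanSpace ℝ (Fin d)) 1 ×ˢ
      Metric.closedBall (0 : ℝ) R) with hCont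
  have hContC : IsCompact Cont :=
    (isCompact_univ_pi hcomp).prod ((isCompact_sphere 0 1).prod (isCompact_closedBall 0 R))
  set W : ℕ → ((Fin (d + 1) → EuclideanSpace ℝ (Fin d)) × (EuclideanSpace ℝ (Fin d) × ℝ)) ×
      ((Fin (d + 1) → EuclideanSpace ℝ (Fin d)) × (EuclideanSpace ℝ (Fin d) × ℝ)) :=
    fun n => ((X n, P n), (X (n + 1), P (n + 1))) with hW
  have hContmem : ∀ n, ((X n, P n) : (Fin (d + 1) → EuclideanSpace ℝ (Fin d)) ×
      (EuclideanSpace ℝ (Fin d) × ℝ)) ∈ Cont := by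
    intro n
    rw [hCont]
    refine Set.mem_prod.2 ⟨Set.mem_univ_pi.2 fun i => hXK n i, Set.mem_prod.2 ⟨?_, ?_⟩⟩
    · exact mem_sphere_zero_iff_norm.2 (hPnorm n)
    · exact mem_closedBall_zero_iff.2 (by rw [Real.norm_eq_abs]; exact hPbd n)
  have hWmem : ∀ n, W n ∈ Cont ×ˢ Cont := fun n =>
    Set.mem_prod.2 ⟨hContmem n, hContmem (n + 1)⟩
  obtain ⟨L, hLmem, φ, hφ, hφtend⟩ := (hContC.prod hContC).tendsto_subseq hWmem
  obtain ⟨⟨Xb, pb⟩, ⟨Xh, ph⟩⟩ := L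
  -- component limits
  have htXb : ∀ i, Filter.Tendsto (fun j => X (φ j) i) Filter.atTop (nhds (Xb i)) :=
    fun i => (((continuous_apply i).comp (continuous_fst.comp continuous_fst)).tendsto _).comp hφtend
  have htXh : ∀ i, Filter.Tendsto (fun j => X (φ j + 1) i) Filter.atTop (nhds (Xh i)) :=
    fun i => (((continuous_apply i).comp (continuous_fst.comp continuous_snd)).tendsto _).comp hφtend
  have htP1 : Filter.Tendsto (fun j => (P (φ j)).1) Filter.atTop (nhds pb.1) :=
    ((continuous_fst.comp (continuous_snd.comp continuous_fst)).tendsto _).comp hφtend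
  have htP2 : Filter.Tendsto (fun j => (P (φ j)).2) Filter.atTop (nhds pb.2) :=
    ((continuous_snd.comp (continuous_snd.comp continuous_fst)).tendsto _).comp hφtend
  have htPh1 : Filter.Tendsto (fun j => (P (φ j + 1)).1) Filter.atTop (nhds ph.1) :=
    ((continuous_fst.comp (continuous_snd.comp continuous_snd)).tendsto _).comp hφtend
  have htPh2 : Filter.Tendsto (fun j => (P (φ j + 1)).2) Filter.atTop (nhds ph.2) :=
    ((continuous_snd.comp (continuous_snd.comp continuous_snd)).tendsto _).comp hφtend
  -- memberships of the limits
  have hXbK : ∀ i, Xb i ∈ K i := fun i => hLmem.1.1 i (Set.mem_univ i)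
  have hXhK : ∀ i, Xh i ∈ K i := fun i => hLmem.2.1 i (Set.mem_univ i)
  have hpbn : ‖pb.1‖ = 1 := mem_sphere_zero_iff_norm.1 hLmem.1.2.1
  have hphn : ‖ph.1‖ = 1 := mem_sphere_zero_iff_norm.1 hLmem.2.2.1
  -- limit contacts
  have hcontLb : ∀ i, i ≠ a → ⟪pb.1, Xb i⟫_ℝ = pb.2 := by
    intro i hia
    have h1 := (htP1.inner (htXb i)).sub htP2
    have h2 : ∀ j, ⟪(P (φ j)).1, X (φ j) i⟫_ℝ - (P (φ j)).2 = 0 := fun j => by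
      rw [hXeq (φ j) i hia]; ring
    have h3 := tendsto_nhds_unique ((Filter.tendsto_congr h2).1 h1) tendsto_const_nhds
    linarith
  have hcontLh : ∀ i, i ≠ a → ⟪ph.1, Xh i⟫_ℝ = ph.2 := by
    intro i hia
    have h1 := (htPh1.inner (htXh i)).sub htPh2
    have h2 : ∀ j, ⟪(P (φ j + 1)).1, X (φ j + 1) i⟫_ℝ - (P (φ j + 1)).2 = 0 := fun j => by
      rw [hXeq (φ j + 1) i hia]; ring
    have h3 := tendsto_nhds_unique ((Filter.tendsto_congr h2).1 h1) tendsto_const_nhds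
    linarith
  -- limit side conditions
  have hsideALb : ∀ i ∈ A, i ≠ i₁ → ∀ y ∈ K i, pb.2 ≤ ⟪pb.1, y⟫_ℝ := by
    intro i hiA hii y hy
    exact le_of_tendsto_of_tendsto' htP2 (htP1.inner tendsto_const_nhds)
      (fun j => hsideA (S (φ j)).1 (P (φ j)) (hsol' (φ j)) i hiA hii hy)
  have hsideBLb : ∀ i ∈ B, i ≠ i₁ → ∀ y ∈ K i, ⟪pb.1, y⟫_ℝ ≤ pb.2 := by
    intro i hiB hii y hy
    exact le_of_tendsto_of_tendsto' (htP1.inner tendsto_const_nhds) htP2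
      (fun j => hsideB (S (φ j)).1 (P (φ j)) (hsol' (φ j)) i hiB hii hy)
  have hsideALh : ∀ i ∈ A, i ≠ i₁ → ∀ y ∈ K i, ph.2 ≤ ⟪ph.1, y⟫_ℝ := by
    intro i hiA hii y hy
    exact le_of_tendsto_of_tendsto' htPh2 (htPh1.inner tendsto_const_nhds)
      (fun j => hsideA (S (φ j + 1)).1 (P (φ j + 1)) (hsol' (φ j + 1)) i hiA hii hy)
  have hsideBLh : ∀ i ∈ B, i ≠ i₁ → ∀ y ∈ K i, ⟪ph.1, y⟫_ℝ ≤ ph.2 := by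
    intro i hiB hii y hy
    exact le_of_tendsto_of_tendsto' (htPh1.inner tendsto_const_nhds) htPh2
      (fun j => hsideB (S (φ j + 1)).1 (P (φ j + 1)) (hsol' (φ j + 1)) i hiB hii hy)
  -- strictness on `K a` for the limits, via the transversal lemma
  have hstrictb : ∀ y ∈ K a, pb.2 < ⟪pb.1, y⟫_ℝ := by
    intro y hy
    have hge : pb.2 ≤ ⟪pb.1, y⟫_ℝ := hsideALb a ha (Ne.symm hi₁a) y hy
    rcases hge.lt_or_eq with h | h
    · exact h
    · exfalso
      have hne0 : pb.1 ≠ 0 := fun h0 => by simp [h0] at hpbn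
      refine hsep.not_cotangent (y := fun i => if i = a then y else Xb i)
        (fun i => ?_) hne0 (γ := pb.2) (fun i => ?_)
      · by_cases hia : i = a
        · simpa [hia] using hy
        · simpa [hia] using hXbK i
      · by_cases hia : i = a
        · simpa [hia] using h.symm
        · simpa [hia] using hcontLb i hia
  have hstricth : ∀ y ∈ K a, ph.2 < ⟪ph.1, y⟫_ℝ := by
    intro y hy
    have hge : ph.2 ≤ ⟪ph.1, y⟫_ℝ := hsideALh a ha (Ne.symm hi₁a) y hy
    rcases hge.lt_or_eq with h | h
    · exact h
    · exfalso
      have hne0 : ph.1 ≠ 0 := fun h0 => by simp [h0] at hphn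
      refine hsep.not_cotangent (y := fun i => if i = a then y else Xh i)
        (fun i => ?_) hne0 (γ := ph.2) (fun i => ?_)
      · by_cases hia : i = a
        · simpa [hia] using hy
        · simpa [hia] using hXhK i
      · by_cases hia : i = a
        · simpa [hia] using h.symm
        · simpa [hia] using hcontLh i hia
  -- the two distinguished limit pins
  have hF1 : σ * (⟪pb.1, Xh i₁⟫_ℝ - pb.2) ≤ 0 := by
    have h1 := (((htP1.inner (htXh i₁)).sub htP2).const_mul σ)
    refine le_of_tendsto h1 (Filter.Eventually.of_forall fun j => ?_)
    have h2 := hneg' (φ j)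
    simp only [hFdef] at h2
    rw [hXi₁ (φ j + 1)]
    exact h2.le
  have hF2 : ∀ y ∈ K i₁, σ * (⟪pb.1, Xh i₁⟫_ℝ - pb.2) ≤ σ * (⟪pb.1, y⟫_ℝ - pb.2) := by
    intro y hy
    refine le_of_tendsto_of_tendsto' (((htP1.inner (htXh i₁)).sub htP2).const_mul σ)
      (((htP1.inner tendsto_const_nhds).sub htP2).const_mul σ)
      (fun j => ?_)
    have h2 := hmin' (φ j) y hy
    simp only [hFdef] at h2
    rw [hXi₁ (φ j + 1)]
    exact h2
  have hF3 : σ * (⟪ph.1, Xb i₁⟫_ℝ - ph.2) ≤ 0 := by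
    have hstep1 : ∀ j, σ * (⟪(P (φ j + 1)).1, Xb i₁⟫_ℝ - (P (φ j + 1)).2) ≤ 0 := by
      intro j
      have htX : Filter.Tendsto
          (fun j' => σ * (⟪(P (φ j + 1)).1, X (φ j') i₁⟫_ℝ - (P (φ j + 1)).2))
          Filter.atTop (nhds (σ * (⟪(P (φ j + 1)).1, Xb i₁⟫_ℝ - (P (φ j + 1)).2))) :=
        ((tendsto_const_nhds.inner (htXb i₁)).sub tendsto_const_nhds).const_mul σ
      refine le_of_tendsto htX ?_
      filter_upwards [Filter.eventually_ge_atTop (φ j + 2)] with j' hj'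
      have hlt : φ j + 1 < φ j' := lt_of_lt_of_le (by omega) (le_trans hj' (hφ.le_apply))
      have h2 := hchain (φ j + 1) (φ j') hlt
      simp only [hFdef] at h2
      rw [hXi₁ (φ j')]
      exact h2
    exact le_of_tendsto (((htPh1.inner tendsto_const_nhds).sub htPh2).const_mul σ)
      (Filter.Eventually.of_forall hstep1)
  -- endgame
  rcases hF1.lt_or_eq with hlt | heq
  · refine win_lemma hconv hne hsep hunion (hXbK i₁) (hXhK i₁)
      (fun i hia _ => ⟨Xb i, hcontLb i hia, hXbK i⟩)
      (fun i hiA hii y hy => hsideALb i hiA hii y hy)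
      (fun i hiB hii y hy => hsideBLb i hiB hii y hy)
      (fun y hy => hstrictb y hy)
      (fun i hia _ => ⟨Xh i, hcontLh i hia, hXhK i⟩)
      (fun i hiA hii y hy => hsideALh i hiA hii y hy)
      (fun i hiB hii y hy => hsideBLh i hiB hii y hy)
      (fun y hy => hstricth y hy)
      (hcontLb i₁ hi₁a) (hcontLh i₁ hi₁a) ?_ ?_
    · exact hkey _ _ hlt hF3
    · exact fun h => hkey2 _ hlt (by rw [h]; ring)
  · refine hno pb ⟨hpbn, fun i hia => ⟨Xb i, hcontLb i hia, hXbK i⟩, ?_, ?_, ?_⟩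
    · intro i hiA y hy
      by_cases hii : i = i₁
      · have h2 := hF2 y (hii ▸ hy)
        rw [heq] at h2
        have hσA : σ = 1 := by rw [hσdef, if_pos (hii ▸ hiA)]
        rw [hσA, one_mul] at h2
        show pb.2 ≤ ⟪pb.1, y⟫_ℝ
        linarith
      · exact hsideALb i hiA hii y hy
    · intro i hiB y hy
      by_cases hii : i = i₁
      · have h2 := hF2 y (hii ▸ hy)
        rw [heq] at h2
        have hσB : σ = -1 := by
          rw [hσdef, if_neg (fun hA => (Finset.disjoint_left.1 hdisj) hA (hii ▸ hiB))]
        rw [hσB] at h2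
        show ⟪pb.1, y⟫_ℝ ≤ pb.2
        linarith
      · exact hsideBLb i hiB hii y hy
    · exact fun y hy => hstrictb y hy

/-- Existence part of the main theorem. -/
lemma exists_aux {d : ℕ} (hd : 0 < d)
    (K : Fin (d + 1) → Set (EuclideanSpace ℝ (Fin d)))
    (hcomp : ∀ i, IsCompact (K i)) (hconv : ∀ i, Convex ℝ (K i))
    (hne : ∀ i, (K i).Nonempty)
    (hspan : ∀ i : Fin (d + 1), affineSpan ℝ (⋃ j ∈ ({i}ᶜ : Set (Fin (d + 1))), K j) = ⊤)
    (hsep : StronglySeparated K)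
    (A B : Finset (Fin (d + 1))) (hdisj : Disjoint A B) (hunion : A ∪ B = Finset.univ)
    (a : Fin (d + 1)) (ha : a ∈ A) :
    ∃ p : EuclideanSpace ℝ (Fin d) × ℝ, ‖p.1‖ = 1 ∧
      (∀ i : Fin (d + 1), i ≠ a → ({x | ⟪p.1, x⟫_ℝ = p.2} ∩ K i).Nonempty) ∧
      (∀ i ∈ A, K i ⊆ {x | p.2 ≤ ⟪p.1, x⟫_ℝ}) ∧
      (∀ i ∈ B, K i ⊆ {x | ⟪p.1, x⟫_ℝ ≤ p.2}) ∧
      K a ⊆ {x | p.2 < ⟪p.1, x⟫_ℝ} := by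
  classical
  suffices H : ∀ (n : ℕ) (T : Finset (Fin (d + 1)))
      (K : Fin (d + 1) → Set (EuclideanSpace ℝ (Fin d))),
      T.card ≤ n →
      (∀ i, IsCompact (K i)) → (∀ i, Convex ℝ (K i)) → (∀ i, (K i).Nonempty) →
      StronglySeparated K →
      (∀ i, i ≠ a → i ∉ T → ∃ x, K i = {x}) →
      ∃ p, IsSol K A B a p by
    obtain ⟨p, hp⟩ := H (d + 1) Finset.univ K (le_of_eq (by simp)) hcomp hconv hne hsep
      (fun i _ hi => absurd (Finset.mem_univ i) hi)
    exact ⟨p, hp⟩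
  intro n
  induction n with
  | zero =>
    intro T K hT hcomp' hconv' hne' hsep' hsing
    have hT0 : T = ∅ := Finset.card_eq_zero.1 (le_antisymm hT (Nat.zero_le _))
    obtain ⟨p, hp⟩ := exists_sol_singletons hd hconv' hne' hsep' hdisj hunion ha
      (fun i hia => hsing i hia (by rw [hT0]; exact Finset.notMem_empty i))
    exact ⟨p, hp⟩
  | succ n IH =>
    intro T K hT hcomp' hconv' hne' hsep' hsing
    by_cases hall : ∀ i, i ≠ a → ∃ x, K i = {x}
    · obtain ⟨p, hp⟩ := exists_sol_singletons hd hconv' hne' hsep' hdisj hunion ha hall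
      exact ⟨p, hp⟩
    · push_neg at hall
      obtain ⟨i₁, hi₁a, hi₁ns⟩ := hall
      have hi₁T : i₁ ∈ T := by
        by_contra h
        obtain ⟨x0, hx0⟩ := hsing i₁ hi₁a h
        exact hi₁ns x0 hx0
      refine exists_sol_step hd hcomp' hconv' hne' hsep' hdisj hunion ha hi₁a ?_
      intro c hc
      refine IH (T.erase i₁) (Function.update K i₁ {c}) ?_ ?_ ?_ ?_ ?_ ?_
      · have := Finset.card_erase_of_mem hi₁T
        omega
      · intro i
        by_cases hii : i = i₁
        · subst hii; rw [Function.update_self]; exact isCompact_singleton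
        · rw [Function.update_of_ne hii]; exact hcomp' i
      · intro i
        by_cases hii : i = i₁
        · subst hii; rw [Function.update_self]; exact convex_singleton c
        · rw [Function.update_of_ne hii]; exact hconv' i
      · intro i
        by_cases hii : i = i₁
        · subst hii; rw [Function.update_self]; exact Set.singleton_nonempty c
        · rw [Function.update_of_ne hii]; exact hne' i
      · exact hsep'.update hc
      · intro i hia hiT
        by_cases hii : i = i₁
        · subst hii; exact ⟨c, Function.update_self _ _ _⟩
        · rw [Function.update_of_ne hii]
          exact hsing i hia (fun hmem => hiT (Finset.mem_erase.2 ⟨hii, hmem⟩))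


/-- For a strongly separated family of `d+1` nonempty compact convex sets in `ℝ^d` whose
`d`-element subfamilies are affinely spanning, a partition `A ⊔ B = [d+1]` and a special
element `a ∈ A`, there is a unique oriented hyperplane `(u, α)` tangent to every set except
possibly `K a`, with `A` on the nonnegative side, `B` on the nonpositive side, and `K a`
strictly on the positive side. -/
theorem unique_tangent_avoiding_one {d : ℕ}
    (K : Fin (d + 1) → Set (EuclideanSpace ℝ (Fin d)))
    (hcomp : ∀ i, IsCompact (K i)) (hconv : ∀ i, Convex ℝ (K i))
    (hne : ∀ i, (K i).Nonempty)
    (hspan : ∀ i : Fin (d + 1), affineSpan ℝ (⋃ j ∈ ({i}ᶜ : Set (Fin (d + 1))), K j) = ⊤)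
    (hsep : StronglySeparated K)
    (A B : Finset (Fin (d + 1))) (hdisj : Disjoint A B) (hunion : A ∪ B = Finset.univ)
    (a : Fin (d + 1)) (ha : a ∈ A) :
    ∃! p : EuclideanSpace ℝ (Fin d) × ℝ, ‖p.1‖ = 1 ∧
      (∀ i : Fin (d + 1), i ≠ a → ({x | ⟪p.1, x⟫_ℝ = p.2} ∩ K i).Nonempty) ∧
      (∀ i ∈ A, K i ⊆ {x | p.2 ≤ ⟪p.1, x⟫_ℝ}) ∧
      (∀ i ∈ B, K i ⊆ {x | ⟪p.1, x⟫_ℝ ≤ p.2}) ∧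
      K a ⊆ {x | p.2 < ⟪p.1, x⟫_ℝ} := by
  rcases Nat.eq_zero_or_pos d with hd0 | hd
  · exfalso
    subst hd0
    obtain ⟨u, α, hu, -⟩ := hsep ∅
    exact hu (by ext i; exact absurd i.2 (by omega))
  · obtain ⟨p, hp⟩ := exists_aux hd K hcomp hconv hne hspan hsep A B hdisj hunion a ha
    exact ⟨p, hp, fun q hq => uniq_aux hd hconv hne hsep hunion hq hp⟩
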